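/- Let A be an invertible D×D matrix and h small enough that I - h·A_h is invertible, where A_h = ∑_{k≥0} ((-1)^k h^k / (k+1)!) A^{k+1}. Then for every vector x, (I - h A_h)^{-1} x = e^{Ah} x; that is, one step of the implicit Euler method applied to the linear vector field y ↦ A_h y exactly reproduces the time-h flow of y' = A y. -/

import Mathlib

open NormedSpace Matrix

attribute [local instance] Matrix.linftyOpNormedRing Matrix.linftyOpNormedAlgebra

set_option maxHeartbeats 1000000 in
/-- For an invertible `A` and `h` such that `I - h • A_h` is invertible,
where `A_h = ∑_{k≥0} ((-1)^k h^k/(k+1)!) A^{k+1}`, one implicit Euler step with the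
linear IMDE vector field `y ↦ A_h y` exactly reproduces the time-`h` flow of `y' = Ay`:
`(1 - h A_h)⁻¹ x = e^{Ah} x` for every vector `x`. -/
theorem stmt_1 (D : ℕ) (A : Matrix (Fin D) (Fin D) ℝ) (hA : IsUnit A) (h : ℝ)
    (Ah : Matrix (Fin D) (Fin D) ℝ)
    (hAh : Ah = ∑' k : ℕ, (((-1 : ℝ) ^ k * h ^ k / (Nat.factorial (k + 1) : ℝ)) • A ^ (k + 1)))
    (hinv : IsUnit (1 - h • Ah)) :
    ∀ x : Fin D → ℝ, (1 - h • Ah)⁻¹ *ᵥ x = exp (h • A) *ᵥ x := by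
  have hs : Summable fun n : ℕ =>
      ((Nat.factorial n : ℝ)⁻¹) • (-(h • A)) ^ n :=
    expSeries_summable' (𝕂 := ℝ) _
  have hterm : ∀ k : ℕ,
      ((Nat.factorial (k + 1) : ℝ)⁻¹) • (-(h • A)) ^ (k + 1)
        = -(h • (((-1 : ℝ) ^ k * h ^ k / (Nat.factorial (k + 1) : ℝ)) • A ^ (k + 1))) := by
    intro k
    have hp : (-(h • A)) ^ (k + 1) = (((-1 : ℝ) * h) ^ (k + 1)) • A ^ (k + 1) := by
      rw [show -(h • A) = ((-1 : ℝ) * h) • A by simp, smul_pow]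
    rw [hp, smul_smul, smul_smul, ← neg_smul]
    congr 1
    have hfac : (Nat.factorial (k + 1) : ℝ) ≠ 0 := by
      exact_mod_cast Nat.factorial_ne_zero (k + 1)
    field_simp
    ring
  have key : (1 : Matrix (Fin D) (Fin D) ℝ) - h • Ah = exp (-(h • A)) := by
    rw [exp_eq_tsum ℝ]
    beta_reduce
    rw [hs.tsum_eq_zero_add]
    have h0 : ((Nat.factorial 0 : ℝ)⁻¹) • (-(h • A)) ^ 0
        = (1 : Matrix (Fin D) (Fin D) ℝ) := by simp
    rw [h0]
    have : (∑' k : ℕ, ((Nat.factorial (k + 1) : ℝ)⁻¹) • (-(h • A)) ^ (k + 1))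
        = -(h • Ah) := by
      calc (∑' k : ℕ, ((Nat.factorial (k + 1) : ℝ)⁻¹) • (-(h • A)) ^ (k + 1))
          = ∑' k : ℕ,
            -(h • (((-1 : ℝ) ^ k * h ^ k / (Nat.factorial (k + 1) : ℝ)) • A ^ (k + 1))) := by
            exact tsum_congr hterm
        _ = -(h • Ah) := by
            rw [tsum_neg, tsum_const_smul'' h, hAh]
    rw [this, sub_eq_add_neg]
  have key' : (1 - h • Ah)⁻¹ = exp (h • A) := by
    rw [key, Matrix.exp_neg]
    exact Matrix.nonsing_inv_nonsing_inv _
      ((Matrix.isUnit_iff_isUnit_det _).mp (Matrix.isUnit_exp _))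
  intro x
  rw [key']
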